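/- For the bit-reversal Leja sequence E on the unit circle (e_k = exp(iπ Σ_j a_j 2^{−j}) with k = Σ_j a_j 2^j binary), and w_{E_k}(z) := Π_{j=0}^{k−1}(z − e_j), one has |w_{E_k}(e_k)| = 2^{σ₁(k)} = sup_{|z|=1} |w_{E_k}(z)| for all k ≥ 1, where σ₁(k) is the number of ones in the binary expansion of k. -/

import Mathlib

open Finset Complex Real

/-- The bit-reversal (Van der Corput) Leja sequence on the unit circle:
`e k = exp(iπ Σ_j a_j 2^{-j})` where `k = Σ_j a_j 2^j` in binary. -/
noncomputable def e (k : ℕ) : ℂ :=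
  Complex.exp (Real.pi * Complex.I *
    ∑ j ∈ Finset.range (k + 1), if k.testBit j then ((1 : ℂ) / 2) ^ j else 0)

/-- number of ones in the binary expansion -/
def sigma1 (k : ℕ) : ℕ := (Nat.digits 2 k).count 1

noncomputable def S (m N : ℕ) : ℂ :=
  ∑ j ∈ Finset.range N, if m.testBit j then ((1 : ℂ) / 2) ^ j else 0

lemma S_congr {m M N : ℕ} (hM : m < 2 ^ M) (hMN : M ≤ N) : S m N = S m M := by
  refine (Finset.sum_subset (Finset.range_subset_range.2 hMN) fun j _ hj => ?_).symm
  have : m < 2 ^ j := lt_of_lt_of_le hM (Nat.pow_le_pow_right (by norm_num)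
    (le_of_not_gt (fun h => hj (Finset.mem_range.2 h))))
  simp [Nat.testBit_lt_two_pow this]

lemma S_eq {m M N : ℕ} (hM : m < 2 ^ M) (hN : m < 2 ^ N) : S m M = S m N := by
  rcases le_total M N with h | h
  · exact (S_congr hM h).symm
  · exact S_congr hN h

lemma e_eq (m N : ℕ) (h : m < 2 ^ N) : e m = Complex.exp (Real.pi * Complex.I * S m N) := by
  rw [e, show (∑ j ∈ Finset.range (m + 1), if m.testBit j then ((1 : ℂ) / 2) ^ j else 0)
      = S m (m+1) from rfl, S_eq ((Nat.lt_two_pow_self (n := m)).trans (Nat.pow_lt_pow_succ one_lt_two)) h]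

lemma S_two_pow {n N : ℕ} (h : n < N) : S (2 ^ n) N = ((1 : ℂ) / 2) ^ n := by
  rw [S, Finset.sum_eq_single_of_mem n (Finset.mem_range.2 h)]
  · simp [Nat.testBit_two_pow_self]
  · intro j _ hj
    simp [Nat.testBit_two_pow_of_ne (Ne.symm hj)]

lemma S_add {n r N : ℕ} (hr : r < 2 ^ n) (hn : n < N) :
    S (2 ^ n + r) N = ((1 : ℂ) / 2) ^ n + S r N := by
  have key : ∀ j, (if (2 ^ n + r).testBit j then ((1:ℂ)/2) ^ j else 0)
      = (if j = n then ((1:ℂ)/2) ^ n else 0)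
        + (if r.testBit j then ((1:ℂ)/2) ^ j else 0) := by
    intro j
    have hb : (2 ^ n + r).testBit j
        = if j < n then r.testBit j else Nat.testBit 1 (j - n) := by
      simpa using Nat.testBit_two_pow_mul_add 1 hr j
    rcases lt_trichotomy j n with h | h | h
    · simp [hb, h, h.ne]
    · subst h
      have : r.testBit j = false := Nat.testBit_lt_two_pow hr
      simp [hb, this]
    · have h1 : Nat.testBit 1 (j - n) = false := by
        apply Nat.testBit_lt_two_pow
        have : 1 ≤ j - n := by omega
        calc 1 < 2 ^ 1 := by norm_num
        _ ≤ 2 ^ (j - n) := Nat.pow_le_pow_right (by norm_num) this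
      have h2 : r.testBit j = false := Nat.testBit_lt_two_pow
        (hr.trans_le (Nat.pow_le_pow_right (by norm_num) h.le))
      simp [hb, h.not_gt, h1, h2, h.ne']
  rw [S, S, Finset.sum_congr rfl (fun j _ => key j), Finset.sum_add_distrib,
    Finset.sum_ite_eq' (Finset.range N) n fun _ => ((1:ℂ)/2) ^ n,
    if_pos (Finset.mem_range.2 hn)]

lemma e_two_pow (n : ℕ) : e (2 ^ n) = Complex.exp (Real.pi * Complex.I * ((1:ℂ)/2) ^ n) := by
  rw [e_eq (2 ^ n) (n + 1) (Nat.pow_lt_pow_succ one_lt_two), S_two_pow (Nat.lt_succ_self n)]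

lemma e_add {n r : ℕ} (hr : r < 2 ^ n) : e (2 ^ n + r) = e (2 ^ n) * e r := by
  have hn : n < n + 1 := Nat.lt_succ_self n
  have hk : 2 ^ n + r < 2 ^ (n + 1) := by
    have := Nat.pow_succ 2 n; omega
  have hrN : r < 2 ^ (n + 1) := hr.trans (Nat.pow_lt_pow_succ one_lt_two)
  rw [e_eq _ _ hk, e_eq _ _ hrN, S_add hr hn, e_two_pow, mul_add, Complex.exp_add]

lemma e_pow_two_pow {n r : ℕ} (hr : r < 2 ^ n) : e r ^ (2 ^ n) = 1 := by
  have hrn : r < 2 ^ n := hr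
  rw [e_eq r n hr, ← Complex.exp_nat_mul]
  set t : ℕ := ∑ j ∈ Finset.range n, if r.testBit j then 2 ^ (n - 1 - j) else 0 with ht
  have hst : ((2 : ℂ) ^ n) * S r n = 2 * (t : ℂ) := by
    rw [S, Finset.mul_sum, ht, Nat.cast_sum, Finset.mul_sum]
    refine Finset.sum_congr rfl fun j hj => ?_
    by_cases hb : r.testBit j
    · have hjn : j < n := Finset.mem_range.1 hj
      simp only [hb, if_true]
      have h2 : (2:ℂ) * 2 ^ (n - 1 - j) * 2 ^ j = 2 ^ n := by
        have h3 : (2:ℂ) * 2 ^ (n - 1 - j) * 2 ^ j = 2 ^ (1 + (n - 1 - j) + j) := by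
          rw [pow_add, pow_add, pow_one]
        rw [h3]; congr 1; omega
      push_cast
      have hz : ((1:ℂ)/2) ^ j = ((2:ℂ) ^ j)⁻¹ := by
        rw [div_pow]; norm_num
      rw [hz, eq_comm, mul_comm (2:ℂ), ← h2]
      field_simp
    · simp [hb]
  have : ((2 ^ n : ℕ) : ℂ) * (Real.pi * Complex.I * S r n) = (t : ℂ) * (2 * Real.pi * Complex.I) := by
    push_cast
    calc ((2:ℂ) ^ n) * (Real.pi * Complex.I * S r n)
        = (Real.pi * Complex.I) * ((2:ℂ) ^ n * S r n) := by ring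
      _ = (Real.pi * Complex.I) * (2 * (t:ℂ)) := by rw [hst]
      _ = (t : ℂ) * (2 * Real.pi * Complex.I) := by ring
  rw [this, Complex.exp_nat_mul_two_pi_mul_I]

lemma rho_pow (n : ℕ) : e (2 ^ n) ^ (2 ^ n) = -1 := by
  rw [e_two_pow, ← Complex.exp_nat_mul]
  have : ((2 ^ n : ℕ) : ℂ) * (Real.pi * Complex.I * ((1:ℂ)/2) ^ n) = Real.pi * Complex.I := by
    have h : ((1:ℂ)/2) ^ n * (2:ℂ) ^ n = 1 := by
      rw [← mul_pow]; norm_num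
    push_cast
    calc ((2:ℂ) ^ n) * (Real.pi * Complex.I * ((1:ℂ)/2) ^ n)
        = (Real.pi * Complex.I) * (((1:ℂ)/2) ^ n * (2:ℂ) ^ n) := by ring
      _ = Real.pi * Complex.I := by rw [h]; ring
  rw [this]
  simpa [mul_comm] using Complex.exp_pi_mul_I

lemma abs_rho (n : ℕ) : ‖e (2 ^ n)‖ = 1 := by
  rw [e_two_pow,
    show (↑Real.pi * Complex.I * ((1:ℂ)/2) ^ n)
        = ((Real.pi * (1/2 : ℝ) ^ n : ℝ) : ℂ) * Complex.I by push_cast; ring]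
  exact Complex.norm_exp_ofReal_mul_I _

lemma rho_ne_zero (n : ℕ) : e (2 ^ n) ≠ 0 := by
  rw [e_two_pow]; exact Complex.exp_ne_zero _

lemma e_zero : e 0 = 1 := by
  simp [e]

lemma prod_roots (n : ℕ) (z : ℂ) :
    ∏ j ∈ Finset.range (2 ^ n), (z - e j) = z ^ (2 ^ n) - 1 := by
  induction n generalizing z with
  | zero => simp [e_zero]
  | succ n ih =>
    have h2 : 2 ^ (n + 1) = 2 ^ n + 2 ^ n := by rw [pow_succ]; ring
    rw [h2, Finset.prod_range_add]
    have hρ := rho_ne_zero n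
    set ρ := e (2 ^ n) with hρdef
    have hstep : ∀ i ∈ Finset.range (2 ^ n), z - e (2 ^ n + i) = ρ * (z * ρ⁻¹ - e i) := by
      intro i hi
      rw [e_add (Finset.mem_range.1 hi)]
      field_simp
      rw [hρdef]; ring
    rw [Finset.prod_congr rfl hstep, Finset.prod_mul_distrib, Finset.prod_const,
      Finset.card_range, ih, ih, rho_pow]
    have hzρ : (z * ρ⁻¹) ^ 2 ^ n = z ^ 2 ^ n * (ρ ^ 2 ^ n)⁻¹ := by
      rw [mul_pow, inv_pow]
    rw [hzρ, rho_pow]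
    rw [pow_add]
    field_simp
    ring

lemma sigma1_zero : sigma1 0 = 0 := by simp [sigma1]

lemma sigma1_add {n r : ℕ} (hr : r < 2 ^ n) : sigma1 (2 ^ n + r) = sigma1 r + 1 := by
  induction n generalizing r with
  | zero =>
    interval_cases r
    simp [sigma1]
  | succ n ih =>
    have hk0 : 2 ^ (n + 1) + r ≠ 0 := by positivity
    rw [sigma1, Nat.digits_def' (by norm_num : 1 < 2) (Nat.pos_of_ne_zero hk0)]
    have hmod : (2 ^ (n + 1) + r) % 2 = r % 2 := by
      omega
    have hdiv : (2 ^ (n + 1) + r) / 2 = 2 ^ n + r / 2 := by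
      omega
    have hr2 : r / 2 < 2 ^ n := by
      have := Nat.pow_succ 2 n; omega
    rw [hmod, hdiv, List.count_cons]
    have IH : sigma1 (2 ^ n + r / 2) = sigma1 (r / 2) + 1 := ih hr2
    rw [sigma1] at IH
    rw [IH]
    rcases Nat.eq_zero_or_pos r with h0 | hpos
    · subst h0
      simp [sigma1]
    · have hr' : sigma1 r = List.count 1 (Nat.digits 2 r) := rfl
      rw [hr', Nat.digits_def' (by norm_num : 1 < 2) hpos, List.count_cons]
      have h5 : sigma1 (r / 2) = List.count 1 (Nat.digits 2 (r / 2)) := rfl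
      rw [h5]
      ring

lemma key (k : ℕ) :
    ‖∏ j ∈ Finset.range k, (e k - e j)‖ = 2 ^ sigma1 k ∧
      ∀ z : ℂ, ‖z‖ = 1 →
        ‖∏ j ∈ Finset.range k, (z - e j)‖ ≤ 2 ^ sigma1 k := by
  induction k using Nat.strong_induction_on with
  | _ k IH =>
    rcases Nat.eq_zero_or_pos k with rfl | hk0
    · constructor
      · simp [sigma1_zero]
      · intro z _; simp [sigma1_zero]
    set n := Nat.log 2 k with hn
    have h1 : 2 ^ n ≤ k := Nat.pow_log_le_self 2 hk0.ne'
    have h2 : k < 2 ^ (n + 1) := Nat.lt_pow_succ_log_self one_lt_two k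
    set r := k - 2 ^ n with hrdef
    have hpow : 2 ^ (n + 1) = 2 ^ n + 2 ^ n := by rw [pow_succ]; ring
    have hkr : k = 2 ^ n + r := by omega
    have hr : r < 2 ^ n := by omega
    have hp : 0 < 2 ^ n := Nat.pow_pos (by norm_num)
    have hrk : r < k := by omega
    set ρ := e (2 ^ n) with hρ
    have hρ0 : ρ ≠ 0 := rho_ne_zero n
    have decomp : ∀ w : ℂ, ‖∏ j ∈ Finset.range k, (w - e j)‖
        = ‖w ^ 2 ^ n - 1‖
          * ‖∏ j ∈ Finset.range r, (w * ρ⁻¹ - e j)‖ := by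
      intro w
      have hsplit : ∏ j ∈ Finset.range k, (w - e j)
          = (w ^ 2 ^ n - 1) * (ρ ^ r * ∏ j ∈ Finset.range r, (w * ρ⁻¹ - e j)) := by
        rw [hkr, Finset.prod_range_add, prod_roots]
        congr 1
        have hstep : ∀ i ∈ Finset.range r, w - e (2 ^ n + i) = ρ * (w * ρ⁻¹ - e i) := by
          intro i hi
          rw [e_add ((Finset.mem_range.1 hi).trans hr)]
          field_simp
          rw [hρ]; ring
        rw [Finset.prod_congr rfl hstep, Finset.prod_mul_distrib, Finset.prod_const,
          Finset.card_range]
      rw [hsplit, norm_mul, norm_mul, norm_pow, abs_rho, one_pow, one_mul]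
    have hsig : sigma1 k = sigma1 r + 1 := by rw [hkr, sigma1_add hr]
    have IHr := IH r hrk
    constructor
    · have hek : e k = ρ * e r := by rw [hkr, e_add hr]
      have hinv : e k * ρ⁻¹ = e r := by
        rw [hek]; field_simp
      have hpowk : e k ^ 2 ^ n = -1 := by
        rw [hek, mul_pow, rho_pow, e_pow_two_pow hr, mul_one]
      rw [decomp (e k), hinv, hpowk, IHr.1, hsig]
      have : (-1 : ℂ) - 1 = -2 := by ring
      rw [this]
      have : ‖(-2 : ℂ)‖ = 2 := by simp
      rw [this, pow_succ]
      ring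
    · intro z hz
      rw [decomp z, hsig]
      have hb1 : ‖z ^ 2 ^ n - 1‖ ≤ 2 := by
        calc ‖z ^ 2 ^ n - 1‖ = ‖z ^ 2 ^ n + (-1)‖ := by ring_nf
          _ ≤ ‖z ^ 2 ^ n‖ + ‖(-1 : ℂ)‖ := norm_add_le _ _
          _ = 2 := by rw [norm_pow, hz, one_pow]; simp; norm_num
      have hzρ : ‖z * ρ⁻¹‖ = 1 := by
        rw [norm_mul, norm_inv, abs_rho, hz]; norm_num
      have hb2 := IHr.2 (z * ρ⁻¹) hzρ
      calc ‖z ^ 2 ^ n - 1‖ * ‖∏ j ∈ Finset.range r, (z * ρ⁻¹ - e j)‖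
          ≤ 2 * 2 ^ sigma1 r := by
            exact mul_le_mul hb1 hb2 (norm_nonneg _) (by norm_num)
        _ = 2 ^ (sigma1 r + 1) := by rw [pow_succ]; ring

theorem abs_w_at_ek (k : ℕ) (hk : 1 ≤ k) :
    ‖∏ j ∈ Finset.range k, (e k - e j)‖ = 2 ^ sigma1 k ∧
      ∀ z : ℂ, ‖z‖ = 1 →
        ‖∏ j ∈ Finset.range k, (z - e j)‖ ≤ 2 ^ sigma1 k :=
  key k
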